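/- Let T be a linear map from n×n real symmetric matrices to m×m real symmetric matrices that is strictly positive, i.e., T(X) is positive definite whenever X is positive definite. Then T is geodesically convex with respect to the Loewner order along geodesics of the positive definite cone: for every n×n positive definite matrix P, every n×n symmetric matrix Q, and every t ∈ [0,1], the matrix (1−t)·T(γ(0)) + t·T(γ(1)) − T(γ(t)) is positive semidefinite, where γ(t) = √P · exp(t·Q) · √P. -/

import Mathlib

open Matrix

namespace Matrix.PosSemidef

open scoped ComplexOrder

/-- The square root of a positive semidefinite matrix, as defined in the older Mathlib
(`Matrix.PosSemidef.sqrt`, since removed). -/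
noncomputable def sqrt {n 𝕜 : Type*} [Fintype n] [RCLike 𝕜] [DecidableEq n]
    {A : Matrix n n 𝕜} (hA : PosSemidef A) : Matrix n n 𝕜 :=
  hA.1.eigenvectorUnitary.1 * diagonal ((↑) ∘ (√·) ∘ hA.1.eigenvalues) *
    (star hA.1.eigenvectorUnitary : Matrix n n 𝕜)

end Matrix.PosSemidef

/-- A strictly positive linear map sends positive semidefinite matrices to
positive semidefinite matrices. -/
lemma aux_T_psd (n m : ℕ)
    (T : Matrix (Fin n) (Fin n) ℝ →ₗ[ℝ] Matrix (Fin m) (Fin m) ℝ)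
    (hTsymm : ∀ X : Matrix (Fin n) (Fin n) ℝ, X.IsSymm → (T X).IsSymm)
    (hTpos : ∀ X : Matrix (Fin n) (Fin n) ℝ, X.PosDef → (T X).PosDef)
    (X : Matrix (Fin n) (Fin n) ℝ) (hX : X.PosSemidef) : (T X).PosSemidef := by
  have hI : (T 1).PosDef := hTpos 1 Matrix.PosDef.one
  rw [Matrix.posSemidef_iff_dotProduct_mulVec]
  constructor
  · have := hTsymm X (by
      rw [Matrix.IsSymm, ← conjTranspose_eq_transpose_of_trivial]
      exact hX.isHermitian)
    rw [Matrix.IsHermitian, conjTranspose_eq_transpose_of_trivial]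
    exact this
  · intro x
    by_cases hx : x = 0
    · simp [hx]
    · have hc : 0 < x ⬝ᵥ (T 1) *ᵥ x := by
        simpa using hI.dotProduct_mulVec_pos hx
      set a : ℝ := star x ⬝ᵥ (T X) *ᵥ x with ha
      have key : ∀ ε : ℝ, 0 < ε → 0 < a + ε * (x ⬝ᵥ (T 1) *ᵥ x) := by
        intro ε hε
        have hεI : ((ε • 1 : Matrix (Fin n) (Fin n) ℝ)).PosDef := by
          rw [Matrix.smul_one_eq_diagonal]
          exact Matrix.posDef_diagonal_iff.mpr fun _ => hε
        have hPD : (T (X + ε • 1)).PosDef := hTpos _ (Matrix.PosDef.posSemidef_add hX hεI)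
        have := hPD.dotProduct_mulVec_pos hx
        simpa [map_add, _root_.map_smul, add_mulVec, smul_mulVec, dotProduct_add,
          dotProduct_smul, ha, smul_eq_mul] using this
      refine le_of_forall_pos_lt_add fun ε hε => ?_
      have := key (ε / (x ⬝ᵥ (T 1) *ᵥ x)) (div_pos hε hc)
      rwa [div_mul_cancel₀ _ (ne_of_gt hc)] at this

/-- Pointwise convexity of the exponential transferred to symmetric matrices. -/
lemma aux_exp_comb_psd (n : ℕ) (Q : Matrix (Fin n) (Fin n) ℝ) (hQ : Q.IsSymm)
    (t : ℝ) (ht0 : 0 ≤ t) (ht1 : t ≤ 1) :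
    ((1 - t) • NormedSpace.exp ((0 : ℝ) • Q) + t • NormedSpace.exp ((1 : ℝ) • Q)
      - NormedSpace.exp (t • Q)).PosSemidef := by
  have hQH : Q.IsHermitian := by
    rw [Matrix.IsHermitian, conjTranspose_eq_transpose_of_trivial]; exact hQ
  set U : Matrix (Fin n) (Fin n) ℝ := (hQH.eigenvectorUnitary : Matrix (Fin n) (Fin n) ℝ) with hUdef
  have hUU : U * star U = 1 := Matrix.mem_unitaryGroup_iff.mp (hQH.eigenvectorUnitary).2
  have hU'U : star U * U = 1 := Matrix.mem_unitaryGroup_iff'.mp (hQH.eigenvectorUnitary).2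
  have hUinv : U⁻¹ = star U := inv_eq_right_inv hUU
  have hUnit : IsUnit U := ⟨⟨U, star U, hUU, hU'U⟩, rfl⟩
  set g : Fin n → ℝ := hQH.eigenvalues with hg
  have key : ∀ s : ℝ, NormedSpace.exp (s • Q)
      = U * diagonal (fun i => Real.exp (s * g i)) * star U := by
    intro s
    have h1 : s • Q = U * diagonal (fun i => s * g i) * U⁻¹ := by
      rw [hUinv]
      conv_lhs => rw [hQH.spectral_theorem]
      have hD : (diagonal (fun i => s * g i) : Matrix (Fin n) (Fin n) ℝ)
          = s • diagonal (RCLike.ofReal ∘ hQH.eigenvalues) := by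
        rw [← Matrix.diagonal_smul]
        congr 1
      rw [hD, mul_smul_comm, smul_mul_assoc]
      simp [hUdef]
    rw [h1, Matrix.exp_conj _ _ hUnit, Matrix.exp_diagonal, hUinv]
    congr 2
    funext i
    rw [Pi.exp_def]
    simp [Real.exp_eq_exp_ℝ]
  rw [key 0, key 1, key t]
  have hD' : (diagonal fun i => (1 - t) * Real.exp (0 * g i) + t * Real.exp (1 * g i)
        - Real.exp (t * g i) : Matrix (Fin n) (Fin n) ℝ)
      = (1 - t) • diagonal (fun i => Real.exp (0 * g i))
        + t • diagonal (fun i => Real.exp (1 * g i))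
        - diagonal (fun i => Real.exp (t * g i)) := by
    ext i j
    rcases eq_or_ne i j with h | h
    · subst h
      simp [Matrix.diagonal_apply_eq, smul_eq_mul]
    · simp [Matrix.diagonal_apply_ne _ h, Matrix.one_apply_ne h]
  have hcomb : (1 - t) • (U * diagonal (fun i => Real.exp (0 * g i)) * star U)
      + t • (U * diagonal (fun i => Real.exp (1 * g i)) * star U)
      - U * diagonal (fun i => Real.exp (t * g i)) * star U
      = U * diagonal (fun i => (1 - t) * Real.exp (0 * g i) + t * Real.exp (1 * g i)
          - Real.exp (t * g i)) * star U := by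
    rw [hD']
    simp only [Matrix.mul_add, Matrix.mul_sub, Matrix.add_mul, Matrix.sub_mul,
      mul_smul_comm, smul_mul_assoc]
  have hnn : ∀ i, 0 ≤ (1 - t) * Real.exp (0 * g i) + t * Real.exp (1 * g i)
      - Real.exp (t * g i) := by
    intro i
    have h := convexOn_exp.2 (Set.mem_univ (0 : ℝ)) (Set.mem_univ (g i))
      (by linarith : (0 : ℝ) ≤ 1 - t) ht0 (by ring : (1 - t) + t = 1)
    simp only [smul_eq_mul, mul_zero, zero_add, Real.exp_zero, mul_one] at h
    simp only [zero_mul, one_mul, Real.exp_zero]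
    linarith
  rw [hcomb, Matrix.star_eq_conjTranspose]
  exact (Matrix.posSemidef_diagonal_iff.mpr hnn).mul_mul_conjTranspose_same U

/-- a strictly positive linear map `T` between spaces of symmetric
matrices is geodesically convex with respect to the Loewner order along the
geodesics `γ(t) = √P · exp(t·Q) · √P` of the positive definite cone:
`(1−t)·T(γ(0)) + t·T(γ(1)) − T(γ(t))` is positive semidefinite for `t ∈ [0,1]`. -/
theorem strictly_positive_map_loewner_gconvex (n m : ℕ)
    (T : Matrix (Fin n) (Fin n) ℝ →ₗ[ℝ] Matrix (Fin m) (Fin m) ℝ)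
    (hTsymm : ∀ X : Matrix (Fin n) (Fin n) ℝ, X.IsSymm → (T X).IsSymm)
    (hTpos : ∀ X : Matrix (Fin n) (Fin n) ℝ, X.PosDef → (T X).PosDef)
    (P Q : Matrix (Fin n) (Fin n) ℝ) (hP : P.PosDef) (hQ : Q.IsSymm) :
    ∀ t ∈ Set.Icc (0 : ℝ) 1,
      ((1 - t) •
          T (hP.posSemidef.sqrt * NormedSpace.exp ((0 : ℝ) • Q) * hP.posSemidef.sqrt)
        + t •
          T (hP.posSemidef.sqrt * NormedSpace.exp ((1 : ℝ) • Q) * hP.posSemidef.sqrt)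
        - T (hP.posSemidef.sqrt * NormedSpace.exp (t • Q) * hP.posSemidef.sqrt)).PosSemidef := by
  intro t ht
  set S := hP.posSemidef.sqrt with hSdef
  have hS : Sᴴ = S := by
    rw [hSdef]
    simp [Matrix.PosSemidef.sqrt, Matrix.conjTranspose_mul, Matrix.mul_assoc, Matrix.star_eq_conjTranspose]
  have hM := aux_exp_comb_psd n Q hQ t ht.1 ht.2
  set E0 := NormedSpace.exp ((0 : ℝ) • Q)
  set E1 := NormedSpace.exp ((1 : ℝ) • Q)
  set Et := NormedSpace.exp (t • Q)
  have hconj : (S * ((1 - t) • E0 + t • E1 - Et) * S).PosSemidef := by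
    have := hM.mul_mul_conjTranspose_same S
    rwa [hS] at this
  have hrw : (1 - t) • T (S * E0 * S) + t • T (S * E1 * S) - T (S * Et * S)
      = T (S * ((1 - t) • E0 + t • E1 - Et) * S) := by
    rw [← T.map_smul, ← T.map_smul, ← map_add, ← map_sub]
    congr 1
    simp only [Matrix.mul_add, Matrix.mul_sub, Matrix.add_mul, Matrix.sub_mul,
      mul_smul_comm, smul_mul_assoc]
  rw [hrw]
  exact aux_T_psd n m T hTsymm hTpos _ hconj
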